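/- arXiv:2403.04082 — 2 statements merged into one kernel-verified Lean document; each statement's English description precedes it below -/
import Mathlib

section
/- Let k ≥ 1, c > 0, let A be a k × k real matrix, and let ψ₀, ψ_T ∈ ℝ^k. Define Λ = (c/(c+1))·AᵀA + ((c+1)/c)·I and μ = Λ⁻¹(Aᵀψ_T + Aψ₀), and define g : ℝ^k → ℝ by g(w) = exp(-((c+1)/(2c))·‖(c/(c+1))·Aw - ψ_T‖²)·exp(-((c+1)/(2c))·‖(c/(c+1))·Aψ₀ - w‖²). Then 0 < ∫ g(w) dw < ∞, and for every w ∈ ℝ^k, g(w)/(∫ g) = (2π)^{-k/2}·(det Λ)^{1/2}·exp(-½·⟨w - μ, Λ(w - μ)⟩); that is, the normalized product is exactly the multivariate Gaussian density with mean μ and covariance Λ⁻¹. -/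
open Matrix MeasureTheory Real RealInnerProductSpace

variable {k : ℕ}


lemma aux_conjT (B : Matrix (Fin k) (Fin k) ℝ) : Bᴴ = Bᵀ := by
  ext i j; simp [Matrix.conjTranspose_apply]

lemma aux_adj (B : Matrix (Fin k) (Fin k) ℝ) (x y : EuclideanSpace ℝ (Fin k)) :
    ⟪Matrix.toEuclideanLin B x, y⟫ = ⟪x, Matrix.toEuclideanLin Bᵀ y⟫ := by
  rw [← aux_conjT, Matrix.toEuclideanLin_conjTranspose_eq_adjoint,
    LinearMap.adjoint_inner_right]

lemma aux_mul (B C : Matrix (Fin k) (Fin k) ℝ) (x : EuclideanSpace ℝ (Fin k)) :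
    Matrix.toEuclideanLin (B * C) x = Matrix.toEuclideanLin B (Matrix.toEuclideanLin C x) := by
  simp [Matrix.toEuclideanLin_apply, Matrix.mulVec_mulVec]

lemma aux_rexp_integrable :
    Integrable (fun v : EuclideanSpace ℝ (Fin k) => rexp (-(1/2) * ‖v‖ ^ 2)) volume := by
  have h := (GaussianFourier.integrable_cexp_neg_mul_sq_norm_add (V := EuclideanSpace ℝ (Fin k))
    (b := (1/2 : ℂ)) (by norm_num) 0 0).norm
  refine h.congr (Filter.Eventually.of_forall fun v => ?_)
  show (‖Complex.exp _‖ : ℝ) = _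
  rw [Complex.norm_exp]
  norm_num [← Complex.ofReal_pow]

lemma aux_rexp_integral :
    ∫ v : EuclideanSpace ℝ (Fin k), rexp (-(1/2) * ‖v‖ ^ 2) = (2 * π) ^ ((k:ℝ) / 2) := by
  have h := GaussianFourier.integral_rexp_neg_mul_sq_norm (V := EuclideanSpace ℝ (Fin k))
    (b := (1/2 : ℝ)) (by norm_num)
  simp only [finrank_euclideanSpace_fin] at h
  rw [h]
  congr 1
  ring

open scoped MatrixOrder in
lemma aux_gauss (k : ℕ) (M : Matrix (Fin k) (Fin k) ℝ) (hM : M.PosDef) :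
    Integrable (fun v : EuclideanSpace ℝ (Fin k) =>
        rexp (-(1/2) * ⟪v, Matrix.toEuclideanLin M v⟫)) volume ∧
    ∫ v : EuclideanSpace ℝ (Fin k), rexp (-(1/2) * ⟪v, Matrix.toEuclideanLin M v⟫)
      = (2 * π) ^ ((k:ℝ) / 2) / Real.sqrt M.det := by
  classical
  set S := CFC.sqrt M with hSdef
  have hS : S * S = M := CFC.sqrt_mul_sqrt_self M hM.posSemidef.nonneg
  have hSps : S.PosSemidef := (CFC.sqrt_nonneg M).posSemidef
  have hSsymm : Sᵀ = S := by rw [← aux_conjT]; exact hSps.isHermitian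
  -- determinant facts
  have hdetnn : 0 ≤ S.det := by
    rw [hSps.isHermitian.det_eq_prod_eigenvalues]
    exact Finset.prod_nonneg fun i _ => hSps.eigenvalues_nonneg i
  have hdetsq : S.det * S.det = M.det := by rw [← Matrix.det_mul, hS]
  have hdetS : S.det = Real.sqrt M.det := by rw [← hdetsq, Real.sqrt_mul_self hdetnn]
  have hdetpos : 0 < S.det := by rw [hdetS]; exact Real.sqrt_pos.mpr hM.det_pos
  -- quadratic form
  have hQ : ∀ v : EuclideanSpace ℝ (Fin k),
      ⟪v, Matrix.toEuclideanLin M v⟫ = ‖Matrix.toEuclideanLin S v‖ ^ 2 := by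
    intro v
    rw [← hS, aux_mul]
    have := aux_adj S v (Matrix.toEuclideanLin S v)
    rw [hSsymm] at this
    rw [← this, real_inner_self_eq_norm_sq]
  -- the linear map and its determinant
  set φ : EuclideanSpace ℝ (Fin k) →ₗ[ℝ] EuclideanSpace ℝ (Fin k) := Matrix.toEuclideanLin S with hφdef
  have hdetφ : LinearMap.det φ = S.det := by
    rw [hφdef, Matrix.toEuclideanLin_eq_toLin]
    exact LinearMap.det_toLin _ _
  have hdetφne : LinearMap.det φ ≠ 0 := by rw [hdetφ]; exact hdetpos.ne'
  -- measurable equiv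
  let e : EuclideanSpace ℝ (Fin k) ≃L[ℝ] EuclideanSpace ℝ (Fin k) :=
    (LinearMap.equivOfDetNeZero φ hdetφne).toContinuousLinearEquiv
  have heφ : ∀ v, e v = φ v := fun v => rfl
  have hmap : Measure.map φ (volume : Measure (EuclideanSpace ℝ (Fin k)))
      = ENNReal.ofReal |(LinearMap.det φ)⁻¹| • volume :=
    Measure.map_linearMap_addHaar_eq_smul_addHaar _ hdetφne
  have hmape : Measure.map e (volume : Measure (EuclideanSpace ℝ (Fin k)))
      = ENNReal.ofReal |(LinearMap.det φ)⁻¹| • volume := by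
    rw [← hmap]; rfl
  have hemb : MeasurableEmbedding (e : EuclideanSpace ℝ (Fin k) → EuclideanSpace ℝ (Fin k)) :=
    e.toHomeomorph.measurableEmbedding
  have hint : Integrable (fun v : EuclideanSpace ℝ (Fin k) =>
      rexp (-(1/2) * ‖Matrix.toEuclideanLin S v‖ ^ 2)) volume := by
    have h1 : Integrable (fun v : EuclideanSpace ℝ (Fin k) => rexp (-(1/2) * ‖v‖ ^ 2))
        (Measure.map e volume) := by
      rw [hmape]
      exact (aux_rexp_integrable).smul_measure ENNReal.ofReal_ne_top
    exact (hemb.integrable_map_iff.mp h1)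
  have hval : ∫ v : EuclideanSpace ℝ (Fin k), rexp (-(1/2) * ‖Matrix.toEuclideanLin S v‖ ^ 2)
      = (2 * π) ^ ((k:ℝ) / 2) / Real.sqrt M.det := by
    have h1 : ∫ v : EuclideanSpace ℝ (Fin k), rexp (-(1/2) * ‖Matrix.toEuclideanLin S v‖ ^ 2)
        = ∫ u, rexp (-(1/2) * ‖u‖ ^ 2) ∂(Measure.map e volume) := by
      rw [hemb.integral_map]
      rfl
    rw [h1, hmape, integral_smul_measure, aux_rexp_integral]
    rw [hdetφ, abs_of_nonneg (inv_nonneg.mpr hdetnn), ENNReal.toReal_ofReal (inv_nonneg.mpr hdetnn)]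
    rw [hdetS]
    rw [smul_eq_mul]
    ring
  have hfun : (fun v : EuclideanSpace ℝ (Fin k) => rexp (-(1/2) * ⟪v, Matrix.toEuclideanLin M v⟫))
      = fun v => rexp (-(1/2) * ‖Matrix.toEuclideanLin S v‖ ^ 2) := by
    funext v
    rw [hQ v]
  constructor
  · rw [hfun]; exact hint
  · rw [hfun]; exact hval

set_option maxHeartbeats 1000000 in
/-- Theorem 1: the product of the two Gaussian conditional factors (for the transitions
`ψ₀ → w` and `w → ψ_T`) has finite positive integral, and after normalization it is exactly
the multivariate Gaussian density with mean `μ = Λ⁻¹(Aᵀψ_T + Aψ₀)` and covariance `Λ⁻¹`,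
where `Λ = (c/(c+1))·AᵀA + ((c+1)/c)·I`. -/
theorem stmt_5 (k : ℕ) (hk : 1 ≤ k) (c : ℝ) (hc : 0 < c)
    (A : Matrix (Fin k) (Fin k) ℝ) (ψ₀ ψT : EuclideanSpace ℝ (Fin k)) :
    let Λ : Matrix (Fin k) (Fin k) ℝ :=
      (c / (c + 1)) • (Aᵀ * A) + ((c + 1) / c) • (1 : Matrix (Fin k) (Fin k) ℝ)
    let μ : EuclideanSpace ℝ (Fin k) :=
      Matrix.toEuclideanLin Λ⁻¹ (Matrix.toEuclideanLin Aᵀ ψT + Matrix.toEuclideanLin A ψ₀)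
    let g : EuclideanSpace ℝ (Fin k) → ℝ := fun w =>
      Real.exp (-((c + 1) / (2 * c)) * ‖(c / (c + 1)) • Matrix.toEuclideanLin A w - ψT‖ ^ 2) *
      Real.exp (-((c + 1) / (2 * c)) * ‖(c / (c + 1)) • Matrix.toEuclideanLin A ψ₀ - w‖ ^ 2)
    Integrable g volume ∧ (0 < ∫ w, g w) ∧
      ∀ w : EuclideanSpace ℝ (Fin k),
        g w / (∫ w', g w')
          = (2 * Real.pi) ^ (-(k : ℝ) / 2) * Real.sqrt Λ.det *
              Real.exp (-(1 / 2) * ⟪w - μ, Matrix.toEuclideanLin Λ (w - μ)⟫) := by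
  intro Λ μ g
  have hc1 : (0:ℝ) < c + 1 := by linarith
  have hcne : c ≠ 0 := hc.ne'
  have hc1ne : c + 1 ≠ 0 := hc1.ne'
  have hΛdef : Λ = (c / (c + 1)) • (Aᵀ * A) + ((c + 1) / c) • (1 : Matrix (Fin k) (Fin k) ℝ) := rfl
  have hμdef : μ = Matrix.toEuclideanLin Λ⁻¹
      (Matrix.toEuclideanLin Aᵀ ψT + Matrix.toEuclideanLin A ψ₀) := rfl
  have htrans : Λᵀ = Λ := by
    rw [hΛdef]
    simp [Matrix.transpose_add, Matrix.transpose_smul, Matrix.transpose_mul,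
      Matrix.transpose_transpose, Matrix.transpose_one]
  have hPD : Λ.PosDef := by
    refine Matrix.posDef_iff_dotProduct_mulVec.mpr ⟨by rw [Matrix.IsHermitian, aux_conjT]; exact htrans, fun x hx => ?_⟩
    have hxx : 0 < dotProduct x x := by
      obtain ⟨i, hi⟩ := Function.ne_iff.mp hx
      refine Finset.sum_pos' (fun j _ => mul_self_nonneg _) ⟨i, Finset.mem_univ i, ?_⟩
      exact mul_self_pos.mpr hi
    have hAx : 0 ≤ dotProduct (A *ᵥ x) (A *ᵥ x) :=
      Finset.sum_nonneg fun j _ => mul_self_nonneg _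
    have h2 : dotProduct (star x) (Λ *ᵥ x)
        = (c/(c+1)) * dotProduct (A *ᵥ x) (A *ᵥ x)
          + ((c+1)/c) * dotProduct x x := by
      rw [hΛdef, star_trivial, Matrix.add_mulVec, Matrix.smul_mulVec,
        Matrix.smul_mulVec, Matrix.one_mulVec, dotProduct_add,
        dotProduct_smul, dotProduct_smul, ← Matrix.mulVec_mulVec,
        Matrix.dotProduct_mulVec, Matrix.vecMul_transpose, smul_eq_mul, smul_eq_mul]
    rw [h2]
    have := mul_pos (div_pos hc1 hc) hxx
    have := mul_nonneg (le_of_lt (div_pos hc hc1)) hAx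
    linarith
  have hLone : ∀ x : EuclideanSpace ℝ (Fin k), Matrix.toEuclideanLin (1 : Matrix (Fin k) (Fin k) ℝ) x = x := by
    intro x
    rw [Matrix.toEuclideanLin_apply, Matrix.one_mulVec]
  have hLA : ∀ x y : EuclideanSpace ℝ (Fin k),
      ⟪x, Matrix.toEuclideanLin Λ y⟫
        = (c/(c+1)) * ⟪Matrix.toEuclideanLin A x, Matrix.toEuclideanLin A y⟫
          + ((c+1)/c) * ⟪x, y⟫ := by
    intro x y
    have hy : Matrix.toEuclideanLin Λ y
        = (c/(c+1)) • Matrix.toEuclideanLin Aᵀ ((Matrix.toEuclideanLin A) y)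
          + ((c+1)/c) • y := by
      rw [hΛdef]
      simp only [map_add, LinearEquiv.map_smul, LinearMap.add_apply, LinearMap.smul_apply]
      rw [aux_mul, hLone]
    rw [hy, inner_add_right, real_inner_smul_right, real_inner_smul_right, ← aux_adj]
  have hΛunit : IsUnit Λ.det := isUnit_iff_ne_zero.mpr hPD.det_pos.ne'
  have hΛμ : Matrix.toEuclideanLin Λ μ
      = Matrix.toEuclideanLin Aᵀ ψT + Matrix.toEuclideanLin A ψ₀ := by
    rw [hμdef, ← aux_mul, Matrix.mul_nonsing_inv _ hΛunit, hLone]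
  have hsym : ∀ x y : EuclideanSpace ℝ (Fin k),
      ⟪x, Matrix.toEuclideanLin Λ y⟫ = ⟪y, Matrix.toEuclideanLin Λ x⟫ := by
    intro x y
    have h1 := aux_adj Λ x y
    rw [htrans] at h1
    rw [← h1, real_inner_comm]
  have hgw : ∀ w : EuclideanSpace ℝ (Fin k), g w
      = Real.exp (-((c+1)/(2*c)) * ⟪ψT, ψT⟫
          - ((c+1)/(2*c)) * ((c/(c+1))^2)
              * ⟪Matrix.toEuclideanLin A ψ₀, Matrix.toEuclideanLin A ψ₀⟫
          + (1/2) * ⟪μ, Matrix.toEuclideanLin Λ μ⟫)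
        * Real.exp (-(1/2) * ⟪w - μ, Matrix.toEuclideanLin Λ (w - μ)⟫) := by
    intro w
    show Real.exp (-((c + 1) / (2 * c)) * ‖(c / (c + 1)) • Matrix.toEuclideanLin A w - ψT‖ ^ 2) *
      Real.exp (-((c + 1) / (2 * c)) * ‖(c / (c + 1)) • Matrix.toEuclideanLin A ψ₀ - w‖ ^ 2) = _
    rw [← Real.exp_add, ← Real.exp_add]
    congr 1
    rw [← real_inner_self_eq_norm_sq, ← real_inner_self_eq_norm_sq]
    simp only [map_sub, inner_sub_left, inner_sub_right, real_inner_smul_left,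
      real_inner_smul_right]
    rw [hsym μ w, hΛμ]
    simp only [inner_add_right]
    rw [← aux_adj, ← aux_adj, hLA w w]
    rw [real_inner_comm ψT (Matrix.toEuclideanLin A w),
      real_inner_comm (Matrix.toEuclideanLin A ψ₀) w]
    field_simp
    ring
  clear_value Λ μ g
  obtain ⟨hGint, hGval⟩ := aux_gauss k Λ hPD
  set f : EuclideanSpace ℝ (Fin k) → ℝ :=
    fun v => rexp (-(1/2) * ⟪v, Matrix.toEuclideanLin Λ v⟫) with hf
  have hshift_int : Integrable (fun w => f (w - μ)) volume := hGint.comp_sub_right μ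
  have hshift_val : ∫ w, f (w - μ) = (2*π)^((k:ℝ)/2) / Real.sqrt Λ.det := by
    rw [integral_sub_right_eq_self f μ]
    exact hGval
  have hg_eq : g = fun w => Real.exp (-((c+1)/(2*c)) * ⟪ψT, ψT⟫
          - ((c+1)/(2*c)) * ((c/(c+1))^2)
              * ⟪Matrix.toEuclideanLin A ψ₀, Matrix.toEuclideanLin A ψ₀⟫
          + (1/2) * ⟪μ, Matrix.toEuclideanLin Λ μ⟫) * f (w - μ) := funext hgw
  have hgint : Integrable g volume := by
    rw [hg_eq]
    exact hshift_int.const_mul _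
  have hgval : ∫ w, g w = Real.exp (-((c+1)/(2*c)) * ⟪ψT, ψT⟫
          - ((c+1)/(2*c)) * ((c/(c+1))^2)
              * ⟪Matrix.toEuclideanLin A ψ₀, Matrix.toEuclideanLin A ψ₀⟫
          + (1/2) * ⟪μ, Matrix.toEuclideanLin Λ μ⟫)
        * ((2*π)^((k:ℝ)/2) / Real.sqrt Λ.det) := by
    rw [hg_eq, integral_const_mul, hshift_val]
  have hrpow_pos : (0:ℝ) < (2*π)^((k:ℝ)/2) := Real.rpow_pos_of_pos (by positivity) _
  have hsqrt_pos : (0:ℝ) < Real.sqrt Λ.det := Real.sqrt_pos.mpr hPD.det_pos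
  refine ⟨hgint, ?_, ?_⟩
  · rw [hgval]
    positivity
  · intro w
    rw [hgw w, hgval]
    rw [show (-(k:ℝ))/2 = -((k:ℝ)/2) by ring, Real.rpow_neg (by positivity)]
    rw [mul_div_mul_left _ _ (Real.exp_ne_zero _), div_div_eq_mul_div, div_eq_mul_inv]
    ring
end

section
/- Let k ≥ 1, n ≥ 1, c > 0, and let A be a k × k real matrix. The nk × nk block tridiagonal matrix Λ_chain whose n diagonal k × k blocks each equal Λ = (c/(c+1))·AᵀA + ((c+1)/c)·I, whose subdiagonal blocks each equal -A, whose superdiagonal blocks each equal -Aᵀ, and whose other blocks are zero, is positive definite; in particular it is invertible. Equivalently: for any ψ₁, …, ψ_n ∈ ℝ^k not all zero, setting ψ₀ = ψ_{n+1} = 0, one has ∑_{i=0}^{n} ((c+1)/c)·‖(c/(c+1))·Aψ_i - ψ_{i+1}‖² > 0, and this sum equals the quadratic form of Λ_chain evaluated at the concatenated vector (ψ₁, …, ψ_n). -/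
open Matrix Finset

lemma dd {ι : Type*} [Fintype ι] (M : Matrix ι ι ℝ) (v w : ι → ℝ) :
    ∑ j, ∑ j', v j * M j j' * w j' = v ⬝ᵥ (M *ᵥ w) := by
  simp [dotProduct, mulVec, Finset.mul_sum, mul_assoc]

lemma blockdiag (k : ℕ) (a b : ℝ) (A : Matrix (Fin k) (Fin k) ℝ) (u : Fin k → ℝ) :
    ∑ j, ∑ j', u j * ((a • (Aᵀ*A) + b • (1:Matrix (Fin k) (Fin k) ℝ)) j j') * u j'
      = a * ∑ l, ((A *ᵥ u) l)^2 + b * ∑ j, (u j)^2 := by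
  rw [dd, Matrix.add_mulVec, Matrix.smul_mulVec, Matrix.smul_mulVec,
    dotProduct_add, dotProduct_smul, dotProduct_smul,
    ← Matrix.mulVec_mulVec, Matrix.dotProduct_mulVec u Aᵀ, Matrix.vecMul_transpose,
    Matrix.one_mulVec]
  simp [dotProduct, sq]

lemma blockoff (k : ℕ) (B : Matrix (Fin k) (Fin k) ℝ) (u v : Fin k → ℝ) :
    ∑ j, ∑ j', u j * ((-Bᵀ) j j') * v j' = -∑ j', ((B *ᵥ u) j') * v j' := by
  rw [dd, Matrix.neg_mulVec, dotProduct_neg, Matrix.dotProduct_mulVec,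
    Matrix.vecMul_transpose]
  simp [dotProduct]

lemma blockoff' (k : ℕ) (B : Matrix (Fin k) (Fin k) ℝ) (u v : Fin k → ℝ) :
    ∑ j, ∑ j', u j * ((-B) j j') * v j' = -∑ j, u j * ((B *ᵥ v) j) := by
  rw [dd, Matrix.neg_mulVec, dotProduct_neg]
  simp [dotProduct]

lemma sum_ite_nat (n m : ℕ) (x : ℝ) :
    ∑ i : Fin n, (if m = (i:ℕ) then x else 0) = if m < n then x else 0 := by
  by_cases h : m < n
  · rw [if_pos h]
    rw [Finset.sum_eq_single_of_mem (⟨m, h⟩ : Fin n) (Finset.mem_univ _)]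
    · simp
    · intro i _ hi
      rw [if_neg]
      intro he
      exact hi (by exact Fin.ext he.symm)
  · rw [if_neg h]
    refine Finset.sum_eq_zero fun i _ => ?_
    rw [if_neg]
    intro he
    exact h (he ▸ i.isLt)

lemma sum_ite_nat' (n m : ℕ) (x : ℝ) :
    ∑ i : Fin n, (if (i:ℕ) + 1 = m then x else 0) = if 1 ≤ m ∧ m ≤ n then x else 0 := by
  by_cases h : 1 ≤ m ∧ m ≤ n
  · rw [if_pos h]
    rw [Finset.sum_eq_single_of_mem (⟨m - 1, by omega⟩ : Fin n) (Finset.mem_univ _)]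
    · rw [if_pos (by simp; omega)]
    · intro i _ hi
      rw [if_neg]
      intro he
      exact hi (by apply Fin.ext; simp; omega)
  · rw [if_neg h]
    refine Finset.sum_eq_zero fun i _ => ?_
    rw [if_neg]
    intro he
    have := i.isLt
    omega

lemma core (n k : ℕ) (a b : ℝ) (hab : b * a = 1) (A : Matrix (Fin k) (Fin k) ℝ)
    (u : ℕ → Fin k → ℝ) (h0 : u 0 = 0) (hn1 : u (n+1) = 0) :
    ∑ i ∈ range (n+1), b * ∑ j, (a * (A *ᵥ u i) j - u (i+1) j)^2
    = ∑ p : Fin n × Fin k, ∑ q : Fin n × Fin k,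
        u ((p.1:ℕ)+1) p.2 *
          (if p.1 = q.1 then (a • (Aᵀ*A) + b • (1:Matrix (Fin k) (Fin k) ℝ)) p.2 q.2
           else if (p.1:ℕ)+1 = (q.1:ℕ) then (-Aᵀ) p.2 q.2
           else if (q.1:ℕ)+1 = (p.1:ℕ) then (-A) p.2 q.2 else 0) *
        u ((q.1:ℕ)+1) q.2 := by
  set Q : ℕ → ℝ := fun i => ∑ l, ((A *ᵥ u i) l)^2 with hQ
  set N : ℕ → ℝ := fun i => ∑ j, (u i j)^2 with hN
  set C : ℕ → ℝ := fun i => ∑ j, ((A *ᵥ u i) j) * (u (i+1) j) with hC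
  have hQ0 : Q 0 = 0 := by simp [hQ, h0]
  have hN1 : N (n+1) = 0 := by simp [hN, hn1]
  have hC0 : C 0 = 0 := by simp [hC, h0]
  have hCn : C n = 0 := by simp [hC, hn1]
  -- LHS
  have lhs_eq : ∑ i ∈ range (n+1), b * ∑ j, (a * (A *ᵥ u i) j - u (i+1) j)^2
      = ∑ i ∈ range (n+1), (a * Q i - 2 * C i + b * N (i+1)) := by
    refine Finset.sum_congr rfl fun i _ => ?_
    rw [hQ, hN, hC]
    simp only [Finset.mul_sum, ← Finset.sum_sub_distrib, ← Finset.sum_add_distrib]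
    refine Finset.sum_congr rfl fun j _ => ?_
    linear_combination (a * ((A *ᵥ u i) j)^2 - 2 * ((A *ᵥ u i) j) * (u (i+1) j)) * hab
  have e1 : ∑ i ∈ range (n+1), Q i = ∑ i ∈ range n, Q (i+1) := by
    rw [Finset.sum_range_succ']; simp [hQ0]
  have e2 : ∑ i ∈ range (n+1), N (i+1) = ∑ i ∈ range n, N (i+1) := by
    rw [Finset.sum_range_succ]; simp [hN1]
  have e3 : ∑ i ∈ range n, C i = ∑ i ∈ range n, C (i+1) := by
    have h1 := Finset.sum_range_succ C n
    have h2 := Finset.sum_range_succ' C n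
    rw [hC0, hCn] at *
    linarith
  have e4 : ∑ i ∈ range (n+1), C i = ∑ i ∈ range n, C (i+1) := by
    rw [Finset.sum_range_succ, hCn, add_zero, e3]
  have lhs_eq2 : ∑ i ∈ range (n+1), (a * Q i - 2 * C i + b * N (i+1))
      = a * ∑ i ∈ range n, Q (i+1) + b * ∑ i ∈ range n, N (i+1)
        - 2 * ∑ i ∈ range n, C (i+1) := by
    rw [Finset.sum_add_distrib, Finset.sum_sub_distrib, ← Finset.mul_sum, ← Finset.mul_sum,
      ← Finset.mul_sum, e1, e2, e4]
    ring
  -- inner block computation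
  have inner : ∀ i i' : Fin n,
      (∑ j, ∑ j', u ((i:ℕ)+1) j *
          (if i = i' then (a • (Aᵀ*A) + b • (1:Matrix (Fin k) (Fin k) ℝ)) j j'
           else if (i:ℕ)+1 = (i':ℕ) then (-Aᵀ) j j'
           else if (i':ℕ)+1 = (i:ℕ) then (-A) j j' else 0) *
        u ((i':ℕ)+1) j')
      = (if i = i' then a * Q ((i:ℕ)+1) + b * N ((i:ℕ)+1) else 0)
        + (if (i:ℕ)+1 = (i':ℕ) then -C ((i:ℕ)+1) else 0)
        + (if (i':ℕ)+1 = (i:ℕ) then -C (i:ℕ) else 0) := by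
    intro i i'
    by_cases h1 : i = i'
    · subst h1
      rw [if_pos rfl, if_neg (by omega), if_neg (by omega), add_zero, add_zero]
      simp only [eq_self_iff_true, if_true]
      rw [blockdiag, hQ, hN]
    · rw [if_neg h1]
      by_cases h2 : (i:ℕ)+1 = (i':ℕ)
      · rw [if_pos h2, if_neg (by omega), zero_add, add_zero]
        simp only [if_neg h1, if_pos h2]
        rw [blockoff, hC]
        simp only [← h2]
      · rw [if_neg h2]
        by_cases h3 : (i':ℕ)+1 = (i:ℕ)
        · rw [if_pos h3, zero_add, zero_add]
          simp only [if_neg h1, if_neg h2, if_pos h3]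
          rw [blockoff', hC]
          simp only [← h3]
          exact neg_inj.mpr (Finset.sum_congr rfl fun j _ => mul_comm _ _)
        · rw [if_neg h3]
          simp only [if_neg h1, if_neg h2, if_neg h3]
          simp
  -- assemble RHS
  have rhs_eq : (∑ p : Fin n × Fin k, ∑ q : Fin n × Fin k,
        u ((p.1:ℕ)+1) p.2 *
          (if p.1 = q.1 then (a • (Aᵀ*A) + b • (1:Matrix (Fin k) (Fin k) ℝ)) p.2 q.2
           else if (p.1:ℕ)+1 = (q.1:ℕ) then (-Aᵀ) p.2 q.2
           else if (q.1:ℕ)+1 = (p.1:ℕ) then (-A) p.2 q.2 else 0) *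
        u ((q.1:ℕ)+1) q.2)
      = ∑ i : Fin n, ∑ i' : Fin n, ∑ j, ∑ j',
          u ((i:ℕ)+1) j *
          (if i = i' then (a • (Aᵀ*A) + b • (1:Matrix (Fin k) (Fin k) ℝ)) j j'
           else if (i:ℕ)+1 = (i':ℕ) then (-Aᵀ) j j'
           else if (i':ℕ)+1 = (i:ℕ) then (-A) j j' else 0) *
        u ((i':ℕ)+1) j' := by
    simp only [Fintype.sum_prod_type]
    exact Finset.sum_congr rfl fun i _ => Finset.sum_comm
  rw [lhs_eq, lhs_eq2, rhs_eq]
  have rhs_eq2 : ∀ i : Fin n, (∑ i' : Fin n, ∑ j, ∑ j',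
          u ((i:ℕ)+1) j *
          (if i = i' then (a • (Aᵀ*A) + b • (1:Matrix (Fin k) (Fin k) ℝ)) j j'
           else if (i:ℕ)+1 = (i':ℕ) then (-Aᵀ) j j'
           else if (i':ℕ)+1 = (i:ℕ) then (-A) j j' else 0) *
        u ((i':ℕ)+1) j')
      = (a * Q ((i:ℕ)+1) + b * N ((i:ℕ)+1))
        + (if (i:ℕ)+1 < n then -C ((i:ℕ)+1) else 0)
        + (if 1 ≤ (i:ℕ) ∧ (i:ℕ) ≤ n then -C (i:ℕ) else 0) := by
    intro i
    rw [Finset.sum_congr rfl fun i' _ => inner i i']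
    rw [Finset.sum_add_distrib, Finset.sum_add_distrib, sum_ite_nat, sum_ite_nat']
    congr 1
    congr 1
    simp [Finset.sum_ite_eq]
  rw [Finset.sum_congr rfl fun i _ => rhs_eq2 i]
  rw [Fin.sum_univ_eq_sum_range (fun m => (a * Q (m+1) + b * N (m+1))
        + (if m+1 < n then -C (m+1) else 0)
        + (if 1 ≤ m ∧ m ≤ n then -C m else 0)) n]
  rw [Finset.sum_add_distrib, Finset.sum_add_distrib, Finset.sum_add_distrib,
    ← Finset.mul_sum, ← Finset.mul_sum]
  have f1 : ∑ i ∈ range n, (if i+1 < n then -C (i+1) else 0) = -∑ i ∈ range n, C (i+1) := by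
    rw [← Finset.sum_neg_distrib]
    refine Finset.sum_congr rfl fun i hi => ?_
    by_cases h : i+1 < n
    · rw [if_pos h]
    · rw [if_neg h]
      have : i + 1 = n := by have := Finset.mem_range.mp hi; omega
      rw [this, hCn, neg_zero]
  have f2 : ∑ i ∈ range n, (if 1 ≤ i ∧ i ≤ n then -C i else 0) = -∑ i ∈ range n, C (i+1) := by
    rw [← e3, ← Finset.sum_neg_distrib]
    refine Finset.sum_congr rfl fun i hi => ?_
    by_cases h : 1 ≤ i ∧ i ≤ n
    · rw [if_pos h]
    · rw [if_neg h]
      have : i = 0 := by have := Finset.mem_range.mp hi; omega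
      rw [this, hC0, neg_zero]
  rw [f1, f2]
  ring


/-- Theorem 2: the `nk × nk` block tridiagonal precision matrix with diagonal blocks
`Λ = (c/(c+1))·AᵀA + ((c+1)/c)·I`, subdiagonal blocks `-A` and superdiagonal blocks `-Aᵀ`
is positive definite (hence invertible).  Equivalently, for `ψ₁, …, ψ_n` not all zero and
`ψ₀ = ψ_{n+1} = 0`, the chain energy `∑_{i=0}^{n} ((c+1)/c)·‖(c/(c+1))·Aψ_i - ψ_{i+1}‖²`
is positive, and it equals the quadratic form of the block matrix at `(ψ₁, …, ψ_n)`. -/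
theorem stmt_8 (k n : ℕ) (hk : 1 ≤ k) (hn : 1 ≤ n) (c : ℝ) (hc : 0 < c)
    (A : Matrix (Fin k) (Fin k) ℝ) :
    let Λ : Matrix (Fin k) (Fin k) ℝ :=
      (c / (c + 1)) • (Aᵀ * A) + ((c + 1) / c) • (1 : Matrix (Fin k) (Fin k) ℝ)
    let Λchain : Matrix (Fin n × Fin k) (Fin n × Fin k) ℝ := fun p q =>
      if p.1 = q.1 then Λ p.2 q.2
      else if (p.1 : ℕ) + 1 = (q.1 : ℕ) then (-Aᵀ) p.2 q.2
      else if (q.1 : ℕ) + 1 = (p.1 : ℕ) then (-A) p.2 q.2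
      else 0
    Λchain.PosDef ∧ IsUnit Λchain ∧
      ∀ ψ : ℕ → EuclideanSpace ℝ (Fin k), ψ 0 = 0 → ψ (n + 1) = 0 →
        (∑ i ∈ Finset.range (n + 1),
            ((c + 1) / c) * ‖(c / (c + 1)) • Matrix.toEuclideanLin A (ψ i) - ψ (i + 1)‖ ^ 2
          = (fun p : Fin n × Fin k => ψ ((p.1 : ℕ) + 1) p.2) ⬝ᵥ
              (Λchain *ᵥ fun p : Fin n × Fin k => ψ ((p.1 : ℕ) + 1) p.2)) ∧
        ((∃ i : ℕ, 1 ≤ i ∧ i ≤ n ∧ ψ i ≠ 0) →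
          0 < ∑ i ∈ Finset.range (n + 1),
            ((c + 1) / c) * ‖(c / (c + 1)) • Matrix.toEuclideanLin A (ψ i) - ψ (i + 1)‖ ^ 2) := by
  intro Λ Λchain
  have hc1 : (0:ℝ) < c + 1 := by linarith
  have hab : ((c+1)/c) * (c/(c+1)) = 1 := by field_simp
  have hb : (0:ℝ) < (c+1)/c := by positivity
  have hnorm : ∀ (v : EuclideanSpace ℝ (Fin k)), ‖v‖^2 = ∑ j, (v j)^2 := fun v => by
    rw [EuclideanSpace.norm_eq, Real.sq_sqrt (by positivity)]
    simp [sq_abs]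
  have hch : ∀ p q : Fin n × Fin k, Λchain p q =
      (if p.1 = q.1 then ((c/(c+1)) • (Aᵀ*A)
          + ((c+1)/c) • (1 : Matrix (Fin k) (Fin k) ℝ)) p.2 q.2
       else if (p.1 : ℕ) + 1 = (q.1 : ℕ) then (-Aᵀ) p.2 q.2
       else if (q.1 : ℕ) + 1 = (p.1 : ℕ) then (-A) p.2 q.2 else 0) := fun _ _ => rfl
  have main : ∀ ψ : ℕ → EuclideanSpace ℝ (Fin k), ψ 0 = 0 → ψ (n + 1) = 0 →
      (∑ i ∈ Finset.range (n + 1),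
          ((c + 1) / c) * ‖(c / (c + 1)) • Matrix.toEuclideanLin A (ψ i) - ψ (i + 1)‖ ^ 2
        = (fun p : Fin n × Fin k => ψ ((p.1 : ℕ) + 1) p.2) ⬝ᵥ
            (Λchain *ᵥ fun p : Fin n × Fin k => ψ ((p.1 : ℕ) + 1) p.2)) ∧
      ((∃ i : ℕ, 1 ≤ i ∧ i ≤ n ∧ ψ i ≠ 0) →
        0 < ∑ i ∈ Finset.range (n + 1),
          ((c + 1) / c) * ‖(c / (c + 1)) • Matrix.toEuclideanLin A (ψ i) - ψ (i + 1)‖ ^ 2) := by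
    intro ψ hψ0 hψn1
    set u : ℕ → Fin k → ℝ := fun i j => ψ i j with hu
    have hu0 : u 0 = 0 := by
      funext j; rw [hu]; simp only [hψ0]; rfl
    have hun1 : u (n+1) = 0 := by
      funext j; rw [hu]; simp only [hψn1]; rfl
    have key : ∀ i : ℕ, ((c + 1) / c)
          * ‖(c / (c + 1)) • Matrix.toEuclideanLin A (ψ i) - ψ (i + 1)‖ ^ 2
        = ((c+1)/c) * ∑ j, ((c/(c+1)) * (A *ᵥ u i) j - u (i+1) j)^2 := by
      intro i
      rw [hnorm]
      rfl
    have heq : ∑ i ∈ Finset.range (n + 1),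
          ((c + 1) / c) * ‖(c / (c + 1)) • Matrix.toEuclideanLin A (ψ i) - ψ (i + 1)‖ ^ 2
        = ∑ i ∈ Finset.range (n+1),
          ((c+1)/c) * ∑ j, ((c/(c+1)) * (A *ᵥ u i) j - u (i+1) j)^2 :=
      Finset.sum_congr rfl fun i _ => key i
    have hcore := core n k (c/(c+1)) ((c+1)/c) hab A u hu0 hun1
    have hdot : (fun p : Fin n × Fin k => ψ ((p.1 : ℕ) + 1) p.2) ⬝ᵥ
          (Λchain *ᵥ fun p : Fin n × Fin k => ψ ((p.1 : ℕ) + 1) p.2)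
        = ∑ p : Fin n × Fin k, ∑ q : Fin n × Fin k,
            u ((p.1:ℕ)+1) p.2 *
              (if p.1 = q.1 then ((c/(c+1)) • (Aᵀ*A)
                  + ((c+1)/c) • (1:Matrix (Fin k) (Fin k) ℝ)) p.2 q.2
               else if (p.1:ℕ)+1 = (q.1:ℕ) then (-Aᵀ) p.2 q.2
               else if (q.1:ℕ)+1 = (p.1:ℕ) then (-A) p.2 q.2 else 0) *
            u ((q.1:ℕ)+1) q.2 := by
      rw [← dd]
    have hEQ : ∑ i ∈ Finset.range (n + 1),
          ((c + 1) / c) * ‖(c / (c + 1)) • Matrix.toEuclideanLin A (ψ i) - ψ (i + 1)‖ ^ 2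
        = (fun p : Fin n × Fin k => ψ ((p.1 : ℕ) + 1) p.2) ⬝ᵥ
            (Λchain *ᵥ fun p : Fin n × Fin k => ψ ((p.1 : ℕ) + 1) p.2) := by
      rw [heq, hcore, hdot]
    refine ⟨hEQ, ?_⟩
    rintro ⟨i0, hi1, hi2, hi3⟩
    by_contra hnot
    push_neg at hnot
    have hterm : ∀ i ∈ Finset.range (n+1),
        ((c + 1) / c) * ‖(c / (c + 1)) • Matrix.toEuclideanLin A (ψ i) - ψ (i + 1)‖ ^ 2 = 0 := by
      have hnonneg : ∀ i ∈ Finset.range (n+1), 0 ≤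
          ((c + 1) / c) * ‖(c / (c + 1)) • Matrix.toEuclideanLin A (ψ i) - ψ (i + 1)‖ ^ 2 :=
        fun i _ => by positivity
      have hzero : ∑ i ∈ Finset.range (n + 1),
          ((c + 1) / c) * ‖(c / (c + 1)) • Matrix.toEuclideanLin A (ψ i) - ψ (i + 1)‖ ^ 2 = 0 :=
        le_antisymm hnot (Finset.sum_nonneg hnonneg)
      exact (Finset.sum_eq_zero_iff_of_nonneg hnonneg).mp hzero
    have hstep : ∀ i, i ≤ n → ψ (i+1) = (c / (c + 1)) • Matrix.toEuclideanLin A (ψ i) := by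
      intro i hi
      have := hterm i (Finset.mem_range.mpr (by omega))
      have h2 : ‖(c / (c + 1)) • Matrix.toEuclideanLin A (ψ i) - ψ (i + 1)‖ = 0 := by
        have hbne : ((c+1)/c) ≠ 0 := ne_of_gt hb
        have := mul_eq_zero.mp this
        rcases this with h | h
        · exact absurd h hbne
        · exact pow_eq_zero_iff (by norm_num) |>.mp h
      have := norm_eq_zero.mp h2
      exact (sub_eq_zero.mp this).symm
    have hall : ∀ i, i ≤ n + 1 → ψ i = 0 := by
      intro i
      induction i with
      | zero => intro _; exact hψ0
      | succ m ih =>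
        intro hm
        rw [hstep m (by omega), ih (by omega)]
        simp
    exact hi3 (hall i0 (by omega))
  have herm : Λchain.IsHermitian := by
    have hΛsym : ∀ j j' : Fin k,
        ((c/(c+1)) • (Aᵀ*A) + ((c+1)/c) • (1:Matrix (Fin k) (Fin k) ℝ)) j j'
        = ((c/(c+1)) • (Aᵀ*A) + ((c+1)/c) • (1:Matrix (Fin k) (Fin k) ℝ)) j' j := by
      intro j j'
      simp only [Matrix.add_apply, Matrix.smul_apply, Matrix.mul_apply,
        Matrix.transpose_apply, Matrix.one_apply, smul_eq_mul]
      congr 1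
      · congr 1
        exact Finset.sum_congr rfl fun l _ => mul_comm _ _
      · by_cases h : j = j'
        · subst h; rfl
        · rw [if_neg h, if_neg (Ne.symm h)]
    show Λchainᴴ = Λchain
    ext p q
    rw [Matrix.conjTranspose_apply, star_trivial, hch, hch]
    obtain ⟨i, j⟩ := p
    obtain ⟨i', j'⟩ := q
    simp only
    by_cases h1 : i = i'
    · subst h1
      rw [if_pos rfl, if_pos rfl]
      exact hΛsym j' j
    · rw [if_neg (Ne.symm h1), if_neg h1]
      by_cases h2 : (i:ℕ)+1 = (i':ℕ)
      · rw [if_neg (by omega), if_pos h2, if_pos h2]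
        simp [Matrix.neg_apply, Matrix.transpose_apply]
      · rw [if_neg h2]
        by_cases h3 : (i':ℕ)+1 = (i:ℕ)
        · rw [if_pos h3, if_neg h2, if_pos h3]
          simp [Matrix.neg_apply, Matrix.transpose_apply]
        · simp only [if_neg h2, if_neg h3]
  have hpos : ∀ x : (Fin n × Fin k) → ℝ, x ≠ 0 → 0 < star x ⬝ᵥ (Λchain *ᵥ x) := by
    intro x hx
    set ψ : ℕ → EuclideanSpace ℝ (Fin k) := fun i =>
      if h : 1 ≤ i ∧ i ≤ n then
        (WithLp.equiv 2 (Fin k → ℝ)).symm (fun j => x (⟨i-1, by omega⟩, j))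
      else 0 with hψ
    have hψ0 : ψ 0 = 0 := by rw [hψ]; simp
    have hψn1 : ψ (n+1) = 0 := by
      rw [hψ]
      simp only
      rw [dif_neg (by omega)]
    have hxψ : (fun p : Fin n × Fin k => ψ ((p.1 : ℕ) + 1) p.2) = x := by
      funext p
      obtain ⟨i, j⟩ := p
      have hcond : 1 ≤ (i:ℕ)+1 ∧ (i:ℕ)+1 ≤ n := ⟨by omega, by have := i.isLt; omega⟩
      rw [hψ]
      simp only [dif_pos hcond]
      have hidx : (⟨(i:ℕ)+1-1, by omega⟩ : Fin n) = i := Fin.ext (by simp)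
      rw [hidx]
      rfl
    obtain ⟨heq, hposs⟩ := main ψ hψ0 hψn1
    rw [hxψ] at heq
    obtain ⟨p, hp⟩ := Function.ne_iff.mp hx
    have hex : ∃ i : ℕ, 1 ≤ i ∧ i ≤ n ∧ ψ i ≠ 0 := by
      refine ⟨(p.1:ℕ)+1, by omega, by have := p.1.isLt; omega, fun h0 => hp ?_⟩
      calc x p = ψ ((p.1:ℕ)+1) p.2 := (congrFun hxψ p).symm
        _ = 0 := by rw [h0]; rfl
    have hfin := hposs hex
    rw [heq] at hfin
    simpa using hfin
  exact ⟨Matrix.PosDef.of_dotProduct_mulVec_pos herm hpos, Matrix.PosDef.isUnit (Matrix.PosDef.of_dotProduct_mulVec_pos herm hpos), main⟩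
end
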